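/- In the front-door structural causal model, for every value t of T with P(T = t) > 0 and every value y of Y, the interventional probability satisfies the front-door adjustment formula: P(Y = y | do(T = t)) = Σ_z P(Z = z | T = t) · Σ_{t'} P(Y = y | T = t', Z = z) · P(T = t'), where the inner sum ranges over values t' with P(T = t', Z = z) > 0 (equivalently, under the assumption that P(T = t', Z = z) > 0 for all t', z). -/

import Mathlib

open MeasureTheory

/-- Conditional probability `P(A | B) = P(A ∩ B) / P(B)`. -/
noncomputable def condP {Ω : Type*} [MeasurableSpace Ω] (μ : Measure Ω)
    (A B : Set Ω) : ENNReal :=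
  μ (A ∩ B) / μ B

/-- **Front-door adjustment formula.**
In the front-door structural causal model with unobserved confounder `U`, treatment
`T = f_T(U, E_T)`, front-door variable `Z = f_Z(T, E_Z)` and outcome `Y = f_Y(Z, U, E_Y)`,
where `U, E_T, E_Z, E_Y` are jointly independent, for every value `t` of `T` with
`P(T = t) > 0` and every value `y` of `Y`,
`P(Y = y | do(T = t)) = ∑_z P(Z = z | T = t) · ∑_{t'} P(Y = y | T = t', Z = z) · P(T = t')`,
under the positivity assumption `P(T = t', Z = z) > 0` for all `t', z`.  Here
`P(Y = y | do(T = t)) := P(ω ↦ f_Y(f_Z(t, E_Z ω), U ω, E_Y ω) = y)`. -/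
theorem frontdoor_adjustment
    {Ω 𝒰 𝒯 𝒵 𝒴 ℰT ℰZ ℰY : Type*}
    [MeasurableSpace Ω] [MeasurableSpace 𝒰] [MeasurableSpace 𝒯] [MeasurableSpace 𝒵]
    [MeasurableSpace 𝒴] [MeasurableSpace ℰT] [MeasurableSpace ℰZ] [MeasurableSpace ℰY]
    [Fintype 𝒰] [Nonempty 𝒰] [MeasurableSingletonClass 𝒰]
    [Fintype 𝒯] [Nonempty 𝒯] [MeasurableSingletonClass 𝒯]
    [Fintype 𝒵] [Nonempty 𝒵] [MeasurableSingletonClass 𝒵]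
    [Fintype 𝒴] [Nonempty 𝒴] [MeasurableSingletonClass 𝒴]
    (μ : Measure Ω) [IsProbabilityMeasure μ]
    (U : Ω → 𝒰) (ET : Ω → ℰT) (EZ : Ω → ℰZ) (EY : Ω → ℰY)
    (hU : Measurable U) (hET : Measurable ET) (hEZ : Measurable EZ) (hEY : Measurable EY)
    (fT : 𝒰 × ℰT → 𝒯) (fZ : 𝒯 × ℰZ → 𝒵) (fY : 𝒵 × 𝒰 × ℰY → 𝒴)
    (hfT : Measurable fT) (hfZ : Measurable fZ) (hfY : Measurable fY)
    -- joint independence of U, E_T, E_Z, E_Y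
    (hIndep : ∀ (A : Set 𝒰) (B : Set ℰT) (C : Set ℰZ) (D : Set ℰY),
      MeasurableSet A → MeasurableSet B → MeasurableSet C → MeasurableSet D →
      μ (U ⁻¹' A ∩ ET ⁻¹' B ∩ EZ ⁻¹' C ∩ EY ⁻¹' D)
        = μ (U ⁻¹' A) * μ (ET ⁻¹' B) * μ (EZ ⁻¹' C) * μ (EY ⁻¹' D))
    -- structural equations
    (T : Ω → 𝒯) (Z : Ω → 𝒵) (Y : Ω → 𝒴)
    (hT : ∀ ω, T ω = fT (U ω, ET ω))
    (hZ : ∀ ω, Z ω = fZ (T ω, EZ ω))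
    (hY : ∀ ω, Y ω = fY (Z ω, U ω, EY ω))
    -- positivity
    (hpos : ∀ (t' : 𝒯) (z : 𝒵), 0 < μ {ω | T ω = t' ∧ Z ω = z})
    (t : 𝒯) (ht : 0 < μ {ω | T ω = t}) (y : 𝒴) :
    μ {ω | fY (fZ (t, EZ ω), U ω, EY ω) = y}
      = ∑ z : 𝒵, condP μ {ω | Z ω = z} {ω | T ω = t}
          * ∑ t' : 𝒯, condP μ {ω | Y ω = y} {ω | T ω = t' ∧ Z ω = z}
              * μ {ω | T ω = t'} := by
  classical
  -- basic finiteness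
  have hfin : ∀ s : Set Ω, μ s ≠ ⊤ := fun s => (measure_lt_top μ s).ne
  -- component sets
  set Bu : 𝒰 → 𝒯 → Set ℰT := fun u t' => {e | fT (u, e) = t'} with hBudef
  set Cs : 𝒯 → 𝒵 → Set ℰZ := fun t' z => {e | fZ (t', e) = z} with hCsdef
  set Ds : 𝒵 → 𝒰 → Set ℰY := fun z u => {e | fY (z, u, e) = y} with hDsdef
  have mBu : ∀ u t', MeasurableSet (Bu u t') := fun u t' =>
    (hfT.comp measurable_prodMk_left) (measurableSet_singleton t')
  have mCs : ∀ t' z, MeasurableSet (Cs t' z) := fun t' z =>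
    (hfZ.comp measurable_prodMk_left) (measurableSet_singleton z)
  have mDs : ∀ z u, MeasurableSet (Ds z u) := fun z u =>
    (hfY.comp (measurable_prodMk_left.comp measurable_prodMk_left))
      (measurableSet_singleton y)
  -- master decomposition lemma
  have Hm : ∀ (B : 𝒰 → Set ℰT) (C : Set ℰZ) (D : 𝒰 → Set ℰY),
      (∀ u, MeasurableSet (B u)) → MeasurableSet C → (∀ u, MeasurableSet (D u)) →
      μ {ω | ET ω ∈ B (U ω) ∧ EZ ω ∈ C ∧ EY ω ∈ D (U ω)}
        = (∑ u : 𝒰, μ (U ⁻¹' {u}) * μ (ET ⁻¹' (B u)) * μ (EY ⁻¹' (D u)))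
            * μ (EZ ⁻¹' C) := by
    intro B C D mB mC mD
    have hset : {ω | ET ω ∈ B (U ω) ∧ EZ ω ∈ C ∧ EY ω ∈ D (U ω)}
        = ⋃ u : 𝒰, (U ⁻¹' {u} ∩ ET ⁻¹' (B u) ∩ EZ ⁻¹' C ∩ EY ⁻¹' (D u)) := by
      ext ω
      simp only [Set.mem_setOf_eq, Set.mem_iUnion, Set.mem_inter_iff, Set.mem_preimage,
        Set.mem_singleton_iff]
      constructor
      · rintro ⟨h1, h2, h3⟩; exact ⟨U ω, ⟨⟨rfl, h1⟩, h2⟩, h3⟩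
      · rintro ⟨u, ⟨⟨hu, h1⟩, h2⟩, h3⟩; subst hu; exact ⟨h1, h2, h3⟩
    have hdisj : Pairwise (Function.onFun Disjoint fun u : 𝒰 =>
        U ⁻¹' {u} ∩ ET ⁻¹' (B u) ∩ EZ ⁻¹' C ∩ EY ⁻¹' (D u)) := by
      intro a b hab
      refine Set.disjoint_left.2 ?_
      rintro ω ⟨⟨⟨ha, _⟩, _⟩, _⟩ ⟨⟨⟨hb, _⟩, _⟩, _⟩
      exact hab (ha.symm.trans hb)
    have hmeas : ∀ u : 𝒰, MeasurableSet
        (U ⁻¹' {u} ∩ ET ⁻¹' (B u) ∩ EZ ⁻¹' C ∩ EY ⁻¹' (D u)) := fun u =>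
      (((hU (measurableSet_singleton u)).inter (hET (mB u))).inter (hEZ mC)).inter
        (hEY (mD u))
    rw [hset, measure_iUnion hdisj hmeas, tsum_fintype, Finset.sum_mul]
    refine Finset.sum_congr rfl fun u _ => ?_
    rw [hIndep {u} (B u) C (D u) (measurableSet_singleton u) (mB u) mC (mD u)]
    ring
  -- P(T = t')
  have hp : ∀ t' : 𝒯, μ {ω | T ω = t'}
      = ∑ u : 𝒰, μ (U ⁻¹' {u}) * μ (ET ⁻¹' (Bu u t')) := by
    intro t'
    have h1 : {ω | T ω = t'}
        = {ω | ET ω ∈ Bu (U ω) t' ∧ EZ ω ∈ (Set.univ : Set ℰZ)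
            ∧ EY ω ∈ (fun _ : 𝒰 => (Set.univ : Set ℰY)) (U ω)} := by
      ext ω; simp [hBudef, hT ω]
    rw [h1, Hm _ _ _ (fun u => mBu u t') MeasurableSet.univ (fun _ => MeasurableSet.univ)]
    simp [measure_univ]
  -- P(T = t' ∧ Z = z)
  have hTZ : ∀ (t' : 𝒯) (z : 𝒵), μ {ω | T ω = t' ∧ Z ω = z}
      = μ {ω | T ω = t'} * μ (EZ ⁻¹' (Cs t' z)) := by
    intro t' z
    have h1 : {ω | T ω = t' ∧ Z ω = z}
        = {ω | ET ω ∈ Bu (U ω) t' ∧ EZ ω ∈ Cs t' z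
            ∧ EY ω ∈ (fun _ : 𝒰 => (Set.univ : Set ℰY)) (U ω)} := by
      ext ω
      simp only [Set.mem_setOf_eq, hBudef, hCsdef, Set.mem_univ, and_true]
      constructor
      · rintro ⟨h1, h2⟩
        refine ⟨by rw [← hT ω]; exact h1, ?_⟩
        rw [← h1, ← hZ ω]; exact h2
      · rintro ⟨h1, h2⟩
        have hTt : T ω = t' := by rw [hT ω]; exact h1
        exact ⟨hTt, by rw [hZ ω, hTt]; exact h2⟩
    rw [h1, Hm _ _ _ (fun u => mBu u t') (mCs t' z) (fun _ => MeasurableSet.univ), hp t']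
    simp [measure_univ]
  -- P(Y = y ∧ T = t' ∧ Z = z)
  have hYTZ : ∀ (t' : 𝒯) (z : 𝒵), μ ({ω | Y ω = y} ∩ {ω | T ω = t' ∧ Z ω = z})
      = (∑ u : 𝒰, μ (U ⁻¹' {u}) * μ (ET ⁻¹' (Bu u t')) * μ (EY ⁻¹' (Ds z u)))
          * μ (EZ ⁻¹' (Cs t' z)) := by
    intro t' z
    have h1 : {ω | Y ω = y} ∩ {ω | T ω = t' ∧ Z ω = z}
        = {ω | ET ω ∈ Bu (U ω) t' ∧ EZ ω ∈ Cs t' z ∧ EY ω ∈ Ds z (U ω)} := by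
      ext ω
      simp only [Set.mem_inter_iff, Set.mem_setOf_eq, hBudef, hCsdef, hDsdef]
      constructor
      · rintro ⟨hy, h1, h2⟩
        refine ⟨by rw [← hT ω]; exact h1, by rw [← h1, ← hZ ω]; exact h2, ?_⟩
        rw [← h2, ← hY ω]; exact hy
      · rintro ⟨h1, h2, h3⟩
        have hTt : T ω = t' := by rw [hT ω]; exact h1
        have hZz : Z ω = z := by rw [hZ ω, hTt]; exact h2
        exact ⟨by rw [hY ω, hZz]; exact h3, hTt, hZz⟩
    rw [h1, Hm _ _ _ (fun u => mBu u t') (mCs t' z) (fun u => mDs z u)]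
  -- positivity consequences
  have hpne : ∀ t' : 𝒯, μ {ω | T ω = t'} ≠ 0 := by
    intro t'
    have hz := hpos t' (Classical.arbitrary 𝒵)
    have hsub : {ω | T ω = t' ∧ Z ω = Classical.arbitrary 𝒵} ⊆ {ω | T ω = t'} :=
      fun ω hω => hω.1
    exact fun h0 => (lt_of_lt_of_le hz (measure_mono hsub)).ne' h0
  have hcne : ∀ (t' : 𝒯) (z : 𝒵), μ (EZ ⁻¹' (Cs t' z)) ≠ 0 := by
    intro t' z h0
    have := hpos t' z
    rw [hTZ t' z, h0, mul_zero] at this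
    exact this.ne' rfl
  -- one-sum for ET
  have hone : ∀ u : 𝒰, ∑ t' : 𝒯, μ (ET ⁻¹' (Bu u t')) = 1 := by
    intro u
    have hset : (⋃ t' : 𝒯, ET ⁻¹' (Bu u t')) = Set.univ := by
      ext ω
      simp only [Set.mem_iUnion, Set.mem_preimage, hBudef, Set.mem_setOf_eq, Set.mem_univ,
        iff_true]
      exact ⟨fT (u, ET ω), rfl⟩
    have hdisj : Pairwise (Function.onFun Disjoint fun t' : 𝒯 => ET ⁻¹' (Bu u t')) := by
      intro a b hab
      refine Set.disjoint_left.2 ?_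
      intro e ha hb
      exact hab ((ha : fT (u, ET e) = a).symm.trans hb)
    rw [← tsum_fintype (L := SummationFilter.unconditional _), ← measure_iUnion hdisj (fun t' => hET (mBu u t')), hset,
      measure_univ]
  -- the interventional LHS
  have hLHS : μ {ω | fY (fZ (t, EZ ω), U ω, EY ω) = y}
      = ∑ z : 𝒵, μ (EZ ⁻¹' (Cs t z)) * ∑ u : 𝒰, μ (U ⁻¹' {u}) * μ (EY ⁻¹' (Ds z u)) := by
    have hset : {ω | fY (fZ (t, EZ ω), U ω, EY ω) = y}
        = ⋃ p : 𝒵 × 𝒰, (U ⁻¹' {p.2} ∩ ET ⁻¹' (Set.univ : Set ℰT)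
            ∩ EZ ⁻¹' (Cs t p.1) ∩ EY ⁻¹' (Ds p.1 p.2)) := by
      ext ω
      constructor
      · intro h
        exact Set.mem_iUnion.2 ⟨(fZ (t, EZ ω), U ω), ⟨⟨rfl, trivial⟩, rfl⟩, h⟩
      · intro h
        obtain ⟨⟨z', u⟩, ⟨⟨hu, -⟩, hc⟩, hd⟩ := Set.mem_iUnion.1 h
        have hu' : U ω = u := hu
        have hc' : fZ (t, EZ ω) = z' := hc
        have hd' : fY (z', u, EY ω) = y := hd
        show fY (fZ (t, EZ ω), U ω, EY ω) = y
        rw [hc', hu']; exact hd'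
    have hdisj : Pairwise (Function.onFun Disjoint fun p : 𝒵 × 𝒰 =>
        U ⁻¹' {p.2} ∩ ET ⁻¹' (Set.univ : Set ℰT) ∩ EZ ⁻¹' (Cs t p.1)
          ∩ EY ⁻¹' (Ds p.1 p.2)) := by
      rintro ⟨z1, u1⟩ ⟨z2, u2⟩ hab
      refine Set.disjoint_left.2 ?_
      rintro ω ⟨⟨⟨hu1, -⟩, hc1⟩, -⟩ ⟨⟨⟨hu2, -⟩, hc2⟩, -⟩
      apply hab
      have hz : z1 = z2 := (hc1 : fZ (t, EZ ω) = z1).symm.trans hc2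
      have hu : u1 = u2 := (hu1 : U ω = u1).symm.trans hu2
      rw [hz, hu]
    have hmeas : ∀ p : 𝒵 × 𝒰, MeasurableSet
        (U ⁻¹' {p.2} ∩ ET ⁻¹' (Set.univ : Set ℰT) ∩ EZ ⁻¹' (Cs t p.1)
          ∩ EY ⁻¹' (Ds p.1 p.2)) := fun p =>
      (((hU (measurableSet_singleton p.2)).inter (hET MeasurableSet.univ)).inter
        (hEZ (mCs t p.1))).inter (hEY (mDs p.1 p.2))
    rw [hset, measure_iUnion hdisj hmeas, tsum_fintype, Fintype.sum_prod_type]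
    refine Finset.sum_congr rfl fun z _ => ?_
    rw [Finset.mul_sum]
    refine Finset.sum_congr rfl fun u _ => ?_
    rw [hIndep {u} Set.univ (Cs t z) (Ds z u) (measurableSet_singleton u)
      MeasurableSet.univ (mCs t z) (mDs z u)]
    simp [measure_univ]
    ring
  -- now compute the RHS
  rw [hLHS]
  refine Finset.sum_congr rfl fun z _ => ?_
  -- outer conditional probability
  have houter : condP μ {ω | Z ω = z} {ω | T ω = t} = μ (EZ ⁻¹' (Cs t z)) := by
    have hAB : {ω | Z ω = z} ∩ {ω | T ω = t} = {ω | T ω = t ∧ Z ω = z} := by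
      ext ω; simp only [Set.mem_inter_iff, Set.mem_setOf_eq]; exact and_comm
    rw [condP, hAB, hTZ t z, mul_comm, mul_div_assoc,
      ENNReal.div_self (hpne t) (hfin _), mul_one]
  -- inner terms
  have hinner : ∀ t' : 𝒯,
      condP μ {ω | Y ω = y} {ω | T ω = t' ∧ Z ω = z} * μ {ω | T ω = t'}
        = ∑ u : 𝒰, μ (U ⁻¹' {u}) * μ (ET ⁻¹' (Bu u t')) * μ (EY ⁻¹' (Ds z u)) := by
    intro t'
    rw [condP, hYTZ t' z, hTZ t' z,
      ENNReal.mul_div_mul_right _ _ (hcne t' z) (hfin _),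
      ENNReal.div_mul_cancel (hpne t') (hfin _)]
  have hsum : ∑ t' : 𝒯,
      condP μ {ω | Y ω = y} {ω | T ω = t' ∧ Z ω = z} * μ {ω | T ω = t'}
        = ∑ u : 𝒰, μ (U ⁻¹' {u}) * μ (EY ⁻¹' (Ds z u)) := by
    rw [Finset.sum_congr rfl fun t' _ => hinner t', Finset.sum_comm]
    refine Finset.sum_congr rfl fun u _ => ?_
    have : ∀ t' : 𝒯, μ (U ⁻¹' {u}) * μ (ET ⁻¹' (Bu u t')) * μ (EY ⁻¹' (Ds z u))
        = (μ (U ⁻¹' {u}) * μ (EY ⁻¹' (Ds z u))) * μ (ET ⁻¹' (Bu u t')) := fun t' => by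
      ring
    rw [Finset.sum_congr rfl fun t' _ => this t', ← Finset.mul_sum, hone u, mul_one]
  rw [houter, hsum]
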